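/- In an abelian category A, if full subcategories X and Z are both closed under subobjects, then X * Z is closed under subobjects. -/

import Mathlib

open CategoryTheory CategoryTheory.Limits

namespace Paper

variable {C : Type*} [Category C] [Abelian C]

/-- Membership in `S ∪ {0}`, up to isomorphism. -/
def MemS0 (S : Set C) (x : C) : Prop :=
  (∃ s ∈ S, Nonempty (x ≅ s)) ∨ IsZero x

/-- `x ∈ (S)ₙ` : `x` admits a filtration `⊥ = c 0 ⊆ ⋯ ⊆ c n = ⊤` of subobjects whose
successive quotients lie in `S ∪ {0}`. -/
def MemFilt (S : Set C) (n : ℕ) (x : C) : Prop :=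
  ∃ (c : Fin (n + 1) → Subobject x) (hc : Monotone c),
    c 0 = ⊥ ∧ c (Fin.last n) = ⊤ ∧
      ∀ i : Fin n,
        MemS0 S
          (cokernel (Subobject.ofLE (c i.castSucc) (c i.succ) (hc (Fin.castSucc_le_succ i))))

/-- The extension closure `⟨S⟩ = ⋃ₙ (S)ₙ`. -/
def ExtClosure (S : Set C) : Set C := {x | ∃ n, MemFilt S n x}

/-- `X * Z` : the objects `y` admitting a short exact sequence `x ↪ y ↠ z` with
`x ∈ X` and `z ∈ Z`. -/
def SesStar (X Z : Set C) : Set C :=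
  {y | ∃ (x z : C) (f : x ⟶ y) (g : y ⟶ z) (w : f ≫ g = 0),
      x ∈ X ∧ z ∈ Z ∧ (ShortComplex.mk f g w).ShortExact}

/-- `Gen S` : quotients of objects of `S`. -/
def GenCl (S : Set C) : Set C := {x | ∃ s ∈ S, ∃ f : s ⟶ x, Epi f}

/-- `Sub S` : subobjects of objects of `S`. -/
def SubCl (S : Set C) : Set C := {x | ∃ s ∈ S, ∃ f : x ⟶ s, Mono f}

/-- `S^⊥` : objects receiving no nonzero morphism from objects of `S`. -/
def PerpR (S : Set C) : Set C := {x | ∀ s ∈ S, ∀ f : s ⟶ x, f = 0}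

/-- `^⊥S` : objects admitting no nonzero morphism to objects of `S`. -/
def PerpL (S : Set C) : Set C := {x | ∀ s ∈ S, ∀ f : x ⟶ s, f = 0}

/-- A class is closed under quotients. -/
def ClosedUnderQuotients (X : Set C) : Prop :=
  ∀ ⦃y a : C⦄ (f : y ⟶ a), Epi f → y ∈ X → a ∈ X

/-- A class is closed under subobjects. -/
def ClosedUnderSubobjects (X : Set C) : Prop :=
  ∀ ⦃a y : C⦄ (f : a ⟶ y), Mono f → y ∈ X → a ∈ X

/-- A class is closed under isomorphisms (i.e. is a strictly full subcategory). -/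
def IsoClosed (X : Set C) : Prop := ∀ ⦃x y : C⦄, (x ≅ y) → x ∈ X → y ∈ X

/-- `(T, F)` is a torsion pair: both classes are strictly full, `Hom(T, F) = 0`,
and every object fits in a short exact sequence `t ↪ x ↠ f` with `t ∈ T`, `f ∈ F`. -/
def IsTorsionPair (Tc F : Set C) : Prop :=
  IsoClosed Tc ∧ IsoClosed F ∧ (∀ t ∈ Tc, ∀ f ∈ F, ∀ g : t ⟶ f, g = 0) ∧
    ∀ y : C, y ∈ SesStar Tc F

/-- `(S₀, S₁, S₂)` is a torsion triple. -/
def IsTorsionTriple (S₀ S₁ S₂ : Set C) : Prop :=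
  IsoClosed S₀ ∧ IsoClosed S₁ ∧ IsoClosed S₂ ∧
    (∀ s ∈ S₀, ∀ t ∈ S₁, ∀ g : s ⟶ t, g = 0) ∧
    (∀ s ∈ S₀, ∀ t ∈ S₂, ∀ g : s ⟶ t, g = 0) ∧
    (∀ s ∈ S₁, ∀ t ∈ S₂, ∀ g : s ⟶ t, g = 0) ∧
    ∀ y : C, y ∈ SesStar S₀ (SesStar S₁ S₂)

end Paper

namespace Paper

/-- A noetherian abelian category: ascending chains of subobjects stabilise. -/
def NoethCat (C : Type*) [Category C] [Abelian C] : Prop :=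
  ∀ (x : C) (f : ℕ →o Subobject x), ∃ n, ∀ m, n ≤ m → f n = f m

end Paper

namespace Paper

variable {C : Type*} [Category C] [Abelian C]

/-- If `X` and `Z` are closed under subobjects, so is `X * Z`. -/
theorem statement4 (X Z : Set C)
    (hX : ClosedUnderSubobjects X) (hZ : ClosedUnderSubobjects Z) :
    ClosedUnderSubobjects (SesStar X Z) := by
  intro a y f hf hy
  obtain ⟨x, z, i, p, w, hx, hz, hse⟩ := hy
  haveI := hf
  haveI := hse.mono_f
  haveI := hse.epi_g
  set g' : a ⟶ z := f ≫ p with hg'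
  have hw : kernel.ι g' ≫ factorThruImage g' = 0 := by
    rw [← cancel_mono (image.ι g')]
    simp [image.fac, kernel.condition]
  have hexact : (ShortComplex.mk (kernel.ι g') (factorThruImage g') hw).Exact := by
    apply ShortComplex.exact_of_f_is_kernel
    refine KernelFork.IsLimit.ofι' _ _ (fun {A} k hk => ?_)
    have hk' : k ≫ g' = 0 := by
      have := hk
      simp only [ShortComplex.mk] at this ⊢
      rw [← image.fac g', ← Category.assoc, this, zero_comp]
    exact ⟨kernel.lift g' k hk', kernel.lift_ι g' k hk'⟩
  refine ⟨kernel g', image g', kernel.ι g', factorThruImage g', hw, ?_, ?_, ?_⟩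
  · -- kernel g' ∈ X
    have hcond : (kernel.ι g' ≫ f) ≫ p = 0 := by
      rw [Category.assoc, ← hg', kernel.condition]
    let l : kernel g' ⟶ x := hse.fIsKernel.lift (KernelFork.ofι (kernel.ι g' ≫ f) hcond)
    have hl : l ≫ i = kernel.ι g' ≫ f := hse.fIsKernel.fac _ WalkingParallelPair.zero
    have : Mono l := by
      have : Mono (l ≫ i) := by rw [hl]; exact mono_comp _ _
      exact mono_of_mono l i
    exact hX l this hx
  · exact hZ (image.ι g') inferInstance hz
  · exact ⟨hexact⟩


end Paper
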